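/- arXiv:1305.3354 — 3 statements merged into one kernel-verified Lean document; each statement's English description precedes it below -/
import Mathlib

section
/- (Rosenthal's exact potential property) In a congestion game, if states s and s' differ only in the strategy of a single player i (i.e. s'_j = s_j for all j ≠ i), then Φ(s) − Φ(s') = c_i(s) − c_i(s'), where Φ is Rosenthal's potential function. -/
open Finset

/-- In a congestion game, the number of players using resource `r` in state `s`. -/
def usage {n : ℕ} {R : Type*} [Fintype R] [DecidableEq R]
    (s : Fin n → Finset R) (r : R) : ℕ :=
  (Finset.univ.filter (fun j : Fin n => r ∈ s j)).card

/-- The cost of player `i` in state `s`: `c_i(s) = ∑_{r ∈ s_i} d_r(f_s(r))`. -/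
def cost {n : ℕ} {R : Type*} [Fintype R] [DecidableEq R]
    (d : R → ℕ → ℕ) (i : Fin n) (s : Fin n → Finset R) : ℕ :=
  ∑ r ∈ s i, d r (usage s r)

/-- Rosenthal's potential function: `Φ(s) = ∑_{r ∈ R} ∑_{k=1}^{f_s(r)} d_r(k)`. -/
def potential {n : ℕ} {R : Type*} [Fintype R] [DecidableEq R]
    (d : R → ℕ → ℕ) (s : Fin n → Finset R) : ℕ :=
  ∑ r : R, ∑ k ∈ Finset.Icc 1 (usage s r), d r k

/-- (Rosenthal's exact potential property) In a congestion game with resources `R`,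
strategy sets `Strat i` and nondecreasing delay functions `d r`, if states `s` and
`s'` differ only in the strategy of player `i`, then
`Φ(s) − Φ(s') = c_i(s) − c_i(s')`. -/
theorem rosenthal_exact_potential {n : ℕ} {R : Type*} [Fintype R] [DecidableEq R]
    (Strat : Fin n → Finset (Finset R)) (d : R → ℕ → ℕ) (hd : ∀ r, Monotone (d r))
    (s s' : Fin n → Finset R) (hs : ∀ j, s j ∈ Strat j) (hs' : ∀ j, s' j ∈ Strat j)
    (i : Fin n) (hdiff : ∀ j, j ≠ i → s' j = s j) :
    (potential d s : ℤ) - potential d s' = (cost d i s : ℤ) - cost d i s' := by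
  classical
  set g : R → ℕ := fun r => ∑ j ∈ Finset.univ.erase i, (if r ∈ s j then 1 else 0) with hg
  have main : ∀ t : Fin n → Finset R, (∀ j, j ≠ i → t j = s j) →
      potential d t = cost d i t + ∑ r : R, ∑ k ∈ Finset.Icc 1 (g r), d r k := by
    intro t ht
    have hu : ∀ r, usage t r = g r + (if r ∈ t i then 1 else 0) := by
      intro r
      rw [usage, Finset.card_filter,
        ← Finset.sum_erase_add _ _ (Finset.mem_univ i), hg]
      congr 1
      exact Finset.sum_congr rfl fun j hj => by
        rw [ht j (Finset.mem_erase.mp hj).1]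
    have hcost : cost d i t = ∑ r : R, if r ∈ t i then d r (g r + 1) else 0 := by
      rw [cost]
      rw [show ∑ r ∈ t i, d r (usage t r) = ∑ r ∈ t i, d r (g r + 1) from
        Finset.sum_congr rfl fun r hr => by rw [hu r, if_pos hr]]
      rw [← Finset.sum_filter, Finset.filter_mem_eq_inter, Finset.univ_inter]
    rw [potential, hcost, ← Finset.sum_add_distrib]
    refine Finset.sum_congr rfl fun r _ => ?_
    rw [hu r]
    by_cases h : r ∈ t i
    · rw [if_pos h, if_pos h, Finset.sum_Icc_succ_top (by omega : 1 ≤ g r + 1)]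
      ring
    · rw [if_neg h, if_neg h]
      simp
  rw [main s (fun j _ => rfl), main s' hdiff]
  push_cast
  ring
end

section
/- (Rosenthal) Every congestion game possesses a pure Nash equilibrium, i.e. a state s such that for every player i and every alternative strategy s'_i ∈ S_i, c_i(s_1,…,s_i,…,s_n) ≤ c_i(s_1,…,s'_i,…,s_n). -/
open Finset

section Aux

variable {n : ℕ} {R : Type*} [Fintype R] [DecidableEq R]

lemma usage_eq (s : Fin n → Finset R) (i : Fin n) (r : R) :
    usage s r = (∑ j ∈ univ.erase i, if r ∈ s j then 1 else 0)
      + (if r ∈ s i then 1 else 0) := by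
  rw [usage, Finset.card_filter, ← Finset.sum_erase_add _ _ (mem_univ i)]

lemma cost_eq (d : R → ℕ → ℕ) (i : Fin n) (u : Fin n → Finset R) :
    cost d i u = ∑ r : R, if r ∈ u i then d r (usage u r) else 0 := by
  rw [cost, Finset.sum_ite_mem, Finset.univ_inter]

lemma potential_key (d : R → ℕ → ℕ) (s : Fin n → Finset R) (i : Fin n) (t : Finset R) :
    potential d (Function.update s i t) + cost d i s
      = potential d s + cost d i (Function.update s i t) := by
  rw [cost_eq, cost_eq, potential, potential, ← Finset.sum_add_distrib,
    ← Finset.sum_add_distrib]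
  refine Finset.sum_congr rfl fun r _ => ?_
  have hF : ∀ j ∈ univ.erase i,
      (if r ∈ Function.update s i t j then 1 else 0) = (if r ∈ s j then 1 else 0) := by
    intro j hj
    rw [Function.update_of_ne (Finset.ne_of_mem_erase hj)]
  have h2 : usage (Function.update s i t) r
      = (∑ j ∈ univ.erase i, if r ∈ s j then 1 else 0) + (if r ∈ t then 1 else 0) := by
    rw [usage_eq _ i, Finset.sum_congr rfl hF, Function.update_self]
  have h1 := usage_eq s i r
  set F := ∑ j ∈ univ.erase i, if r ∈ s j then 1 else 0 with hFdef
  rw [Function.update_self, h1, h2]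
  split_ifs with hsi ht ht <;>
    simp [Finset.sum_Icc_succ_top (Nat.le_add_left 1 F)] <;> omega

end Aux

/-- (Rosenthal) Every congestion game possesses a pure Nash equilibrium: a state
`s` (with `s i` a strategy of player `i`) such that for every player `i` and every
alternative strategy `t ∈ Strat i`, `c_i(s) ≤ c_i(s_{-i}, t)`. -/
theorem congestionGame_exists_pure_nash {n : ℕ} {R : Type*} [Fintype R] [DecidableEq R]
    (Strat : Fin n → Finset (Finset R)) (hne : ∀ i, (Strat i).Nonempty)
    (d : R → ℕ → ℕ) (hd : ∀ r, Monotone (d r)) :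
    ∃ s : Fin n → Finset R, (∀ i, s i ∈ Strat i) ∧
      ∀ i : Fin n, ∀ t ∈ Strat i, cost d i s ≤ cost d i (Function.update s i t) := by
  classical
  set S : Finset (Fin n → Finset R) := Fintype.piFinset Strat with hS
  have hSne : S.Nonempty := by
    obtain ⟨f, hf⟩ := Classical.axiomOfChoice hne
    exact ⟨f, by simp [hS, Fintype.mem_piFinset, hf]⟩
  obtain ⟨s, hsS, hmin⟩ := S.exists_min_image (potential d) hSne
  refine ⟨s, fun i => (Fintype.mem_piFinset.mp hsS) i, fun i t ht => ?_⟩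
  have hmem : Function.update s i t ∈ S := by
    rw [hS, Fintype.mem_piFinset]
    intro j
    rcases eq_or_ne j i with rfl | hj
    · simpa using ht
    · rw [Function.update_of_ne hj]
      exact (Fintype.mem_piFinset.mp hsS) j
  have hpot := hmin _ hmem
  have hkey := potential_key d s i t
  omega
end

section
/- In a congestion game, any state s that is a local minimum of Rosenthal's potential function Φ with respect to unilateral deviations (i.e. Φ(s) ≤ Φ(s') for every state s' obtained from s by a single player changing his strategy) is a pure Nash equilibrium. -/
open Finset

lemma usage_update {n : ℕ} {R : Type*} [Fintype R] [DecidableEq R]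
    (s : Fin n → Finset R) (i : Fin n) (t : Finset R) (r : R) :
    usage (Function.update s i t) r + (if r ∈ s i then 1 else 0)
      = usage s r + (if r ∈ t then 1 else 0) := by
  classical
  simp only [usage, Finset.card_filter]
  have h1 : (∑ j : Fin n, if r ∈ Function.update s i t j then 1 else 0)
      = (if r ∈ t then 1 else 0) + ∑ j ∈ Finset.univ.erase i,
          (if r ∈ s j then 1 else 0) := by
    rw [← Finset.add_sum_erase Finset.univ
      (fun j => if r ∈ Function.update s i t j then 1 else 0) (Finset.mem_univ i)]
    rw [Function.update_self]
    congr 1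
    refine Finset.sum_congr rfl fun j hj => ?_
    rw [Function.update_of_ne (Finset.ne_of_mem_erase hj)]
  have h2 : (∑ j : Fin n, if r ∈ s j then 1 else 0)
      = (if r ∈ s i then 1 else 0) + ∑ j ∈ Finset.univ.erase i,
          (if r ∈ s j then 1 else 0) :=
    (Finset.add_sum_erase Finset.univ
      (fun j => if r ∈ s j then 1 else 0) (Finset.mem_univ i)).symm
  rw [h1, h2]
  ring

lemma potential_exact {n : ℕ} {R : Type*} [Fintype R] [DecidableEq R]
    (d : R → ℕ → ℕ) (s : Fin n → Finset R) (i : Fin n) (t : Finset R) :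
    potential d (Function.update s i t) + cost d i s
      = potential d s + cost d i (Function.update s i t) := by
  classical
  have hite : ∀ (A : Finset R) (f : R → ℕ),
      ∑ r ∈ A, f r = ∑ r : R, if r ∈ A then f r else 0 := by
    intro A f
    rw [Finset.sum_ite_mem, Finset.univ_inter]
  unfold potential cost
  rw [Function.update_self, hite (s i), hite t, ← Finset.sum_add_distrib,
    ← Finset.sum_add_distrib]
  refine Finset.sum_congr rfl fun r _ => ?_
  have hu := usage_update s i t r
  by_cases hsi : r ∈ s i <;> by_cases ht : r ∈ t <;>
    simp only [hsi, ht, if_true, if_false] at hu ⊢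
  · have : usage (Function.update s i t) r = usage s r := by omega
    rw [this]
  · have : usage s r = usage (Function.update s i t) r + 1 := by omega
    rw [this, Finset.sum_Icc_succ_top (Nat.le_add_left 1 _)]
    omega
  · have : usage (Function.update s i t) r = usage s r + 1 := by omega
    rw [this, Finset.sum_Icc_succ_top (Nat.le_add_left 1 _)]
    omega
  · have : usage (Function.update s i t) r = usage s r := by omega
    rw [this]

/-- In a congestion game, any state `s` that is a local minimum of Rosenthal's
potential function with respect to unilateral deviations is a pure Nash
equilibrium. -/
theorem potential_local_min_is_nash {n : ℕ} {R : Type*} [Fintype R] [DecidableEq R]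
    (Strat : Fin n → Finset (Finset R)) (d : R → ℕ → ℕ) (hd : ∀ r, Monotone (d r))
    (s : Fin n → Finset R) (hs : ∀ i, s i ∈ Strat i)
    (hmin : ∀ i : Fin n, ∀ t ∈ Strat i,
      potential d s ≤ potential d (Function.update s i t)) :
    ∀ i : Fin n, ∀ t ∈ Strat i, cost d i s ≤ cost d i (Function.update s i t) := by
  intro i t ht
  have hkey := potential_exact d s i t
  have hle := hmin i t ht
  omega
end
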